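/- Simplification of the paired h-factors: define e(w_1,w_2;n_1,n_2) = ((1-τ^{n_1} w_1 w_2)(1-τ^{n_2} w_1 w_2)) / ((1-w_1 w_2)(1-τ^{n_1+n_2} w_1 w_2)), h_1(w_1,w_2;n_1,n_2) = ((w_1 w_2;τ)_∞ (τ^{n_1+n_2} w_1 w_2;τ)_∞)/((τ^{n_1} w_1 w_2;τ)_∞ (τ^{n_2} w_1 w_2;τ)_∞) and h_2(w_a,w_b;n_a,n_b) = ((w_a τ^{n_a} - w_b τ^{n_b})(w_b - w_a))/((w_a τ^{n_a} - w_b)(w_b τ^{n_b} - w_a)). Then for any complex w_1, w_2 and nonnegative integers n_1, n_2 for which both sides are defined, h_1(w_1,w_2;n_1,n_2) · h_1(τ^{-n_1}/w_1, τ^{-n_2}/w_2; n_1,n_2) · h_2(τ^{-n_1}/w_1, w_2; n_1,n_2) · h_2(w_1, τ^{-n_2}/w_2; n_1,n_2) = τ^{-n_1 n_2} · e(w_1,w_2;n_1,n_2). -/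

import Mathlib

/-- The infinite q-Pochhammer symbol `(a; q)_∞ = ∏_{k=0}^∞ (1 - q^k a)`. -/
noncomputable def pochinf (a q : ℂ) : ℂ := ∏' k : ℕ, (1 - q ^ k * a)

/-- `𝔢(w₁,w₂;n₁,n₂)`. -/
noncomputable def mfe (t w₁ w₂ : ℂ) (n₁ n₂ : ℕ) : ℂ :=
  ((1 - t ^ n₁ * (w₁ * w₂)) * (1 - t ^ n₂ * (w₁ * w₂))) /
    ((1 - w₁ * w₂) * (1 - t ^ (n₁ + n₂) * (w₁ * w₂)))

/-- `𝔥₁(w₁,w₂;n₁,n₂)`. -/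
noncomputable def mfh₁ (t w₁ w₂ : ℂ) (n₁ n₂ : ℕ) : ℂ :=
  (pochinf (w₁ * w₂) t * pochinf (t ^ (n₁ + n₂) * (w₁ * w₂)) t) /
    (pochinf (t ^ n₁ * (w₁ * w₂)) t * pochinf (t ^ n₂ * (w₁ * w₂)) t)

/-- `𝔥₂(w₁,w₂;n₁,n₂)`. -/
noncomputable def mfh₂ (t w₁ w₂ : ℂ) (n₁ n₂ : ℕ) : ℂ :=
  ((w₁ * t ^ n₁ - w₂ * t ^ n₂) * (w₂ - w₁)) /
    ((w₁ * t ^ n₁ - w₂) * (w₂ * t ^ n₂ - w₁))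



lemma summable_log_poch (t a : ℂ) (ht : ‖t‖ < 1) :
    Summable fun k : ℕ => Complex.log (1 - t ^ k * a) := by
  apply Summable.of_norm_bounded_eventually_nat (g := fun k => 3/2 * (‖a‖ * ‖t‖ ^ k))
  · exact (((summable_geometric_of_lt_one (norm_nonneg t) ht).mul_left ‖a‖).mul_left (3/2))
  · have h1 : Filter.Tendsto (fun k : ℕ => ‖a‖ * ‖t‖ ^ k) Filter.atTop (nhds 0) := by
      simpa using (tendsto_pow_atTop_nhds_zero_of_lt_one (by positivity) ht).const_mul ‖a‖
    have h2 : ∀ᶠ k in Filter.atTop, ‖a‖ * ‖t‖ ^ k ≤ 1/2 :=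
      h1.eventually (ge_mem_nhds (by norm_num))
    filter_upwards [h2] with k hk
    have hz : ‖-(t ^ k * a)‖ ≤ 1/2 := by
      rw [norm_neg, norm_mul, norm_pow, mul_comm]; exact hk
    have := Complex.norm_log_one_add_half_le_self hz
    rw [show (1 : ℂ) + -(t ^ k * a) = 1 - t ^ k * a by ring] at this
    calc ‖Complex.log (1 - t ^ k * a)‖ ≤ 3/2 * ‖-(t ^ k * a)‖ := this
      _ = 3/2 * (‖a‖ * ‖t‖ ^ k) := by rw [norm_neg, norm_mul, norm_pow]; ring

lemma pochinf_multipliable (t a : ℂ) (ht : ‖t‖ < 1) (h : ∀ k : ℕ, 1 - t ^ k * a ≠ 0) :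
    Multipliable fun k : ℕ => 1 - t ^ k * a :=
  Complex.multipliable_of_summable_log (summable_log_poch t a ht)

lemma pochinf_ne_zero (t a : ℂ) (ht : ‖t‖ < 1) (h : ∀ k : ℕ, 1 - t ^ k * a ≠ 0) :
    pochinf a t ≠ 0 := by
  have := Complex.cexp_tsum_eq_tprod (f := fun k => 1 - t ^ k * a)
    (fun k => h k) (summable_log_poch t a ht)
  have h2 := this
  rw [pochinf, ← h2]
  exact Complex.exp_ne_zero _

lemma pochinf_split (t a : ℂ) (ht : ‖t‖ < 1) (h : ∀ k : ℕ, 1 - t ^ k * a ≠ 0) (n : ℕ) :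
    pochinf a t = (∏ k ∈ Finset.range n, (1 - t ^ k * a)) * pochinf (t ^ n * a) t := by
  have e : (fun k : ℕ => 1 - t ^ k * (t ^ n * a)) = fun k : ℕ => 1 - t ^ (k + n) * a :=
    funext fun k => by rw [pow_add]; ring
  have h' : ∀ k : ℕ, 1 - t ^ k * (t ^ n * a) ≠ 0 := fun k => by
    have := congrFun e k; rw [this]; exact h (k + n)
  have hm' : Multipliable fun i : ℕ => 1 - t ^ (i + n) * a := by
    rw [← e]; exact pochinf_multipliable t (t ^ n * a) ht h'
  rw [pochinf, pochinf, e]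
  exact (Multipliable.prod_mul_tprod_nat_mul' (f := fun k : ℕ => 1 - t ^ k * a) (k := n) hm').symm


lemma mfh₁_eq {t w₁ w₂ : ℂ} (ht : ‖t‖ < 1) (n₁ n₂ : ℕ)
    (h : ∀ k : ℕ, 1 - t ^ k * (w₁ * w₂) ≠ 0) :
    mfh₁ t w₁ w₂ n₁ n₂ =
      (∏ k ∈ Finset.range n₁, (1 - t ^ k * (w₁ * w₂))) /
        (∏ k ∈ Finset.range n₁, (1 - t ^ (n₂ + k) * (w₁ * w₂))) := by
  set a := w₁ * w₂ with ha
  have hsh : ∀ m k : ℕ, 1 - t ^ k * (t ^ m * a) = 1 - t ^ (m + k) * a := fun m k => by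
    rw [pow_add]; ring
  have h2 : ∀ m : ℕ, ∀ k : ℕ, 1 - t ^ k * (t ^ m * a) ≠ 0 := fun m k => by
    rw [hsh]; exact h (m + k)
  have e1 := pochinf_split t a ht h n₁
  have e2 := pochinf_split t (t ^ n₂ * a) ht (h2 n₂) n₁
  have e3 : t ^ n₁ * (t ^ n₂ * a) = t ^ (n₁ + n₂) * a := by rw [pow_add]; ring
  rw [e3] at e2
  have q₁ : pochinf (t ^ n₁ * a) t ≠ 0 := pochinf_ne_zero t _ ht (h2 n₁)
  have q₂ : pochinf (t ^ (n₁ + n₂) * a) t ≠ 0 := pochinf_ne_zero t _ ht (h2 (n₁ + n₂))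
  have hP₂ : (∏ k ∈ Finset.range n₁, (1 - t ^ k * (t ^ n₂ * a))) =
      ∏ k ∈ Finset.range n₁, (1 - t ^ (n₂ + k) * a) :=
    Finset.prod_congr rfl fun k _ => hsh n₂ k
  have hP₂ne : (∏ k ∈ Finset.range n₁, (1 - t ^ (n₂ + k) * a)) ≠ 0 :=
    Finset.prod_ne_zero_iff.mpr fun k _ => h (n₂ + k)
  rw [mfh₁, e1, e2, hP₂]
  rw [div_eq_div_iff (mul_ne_zero q₁ (mul_ne_zero hP₂ne q₂)) hP₂ne]
  ring

set_option maxHeartbeats 2000000 in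
/-- **Simplification of the paired 𝔥-factors**:
`𝔥₁(w₁,w₂) 𝔥₁(τ^{-n₁}/w₁, τ^{-n₂}/w₂) 𝔥₂(τ^{-n₁}/w₁, w₂) 𝔥₂(w₁, τ^{-n₂}/w₂)
  = τ^{-n₁ n₂} 𝔢(w₁,w₂)`. -/
theorem paired_h_simplification (τ : ℝ) (hτ : τ ∈ Set.Ioo (0 : ℝ) 1)
    (w₁ w₂ : ℂ) (n₁ n₂ : ℕ) (hw₁ : w₁ ≠ 0) (hw₂ : w₂ ≠ 0)
    (hnz : ∀ k : ℤ, (1 : ℂ) - (τ : ℂ) ^ k * (w₁ * w₂) ≠ 0) :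
    mfh₁ (τ : ℂ) w₁ w₂ n₁ n₂ *
      mfh₁ (τ : ℂ) ((τ : ℂ) ^ (-(n₁ : ℤ)) / w₁) ((τ : ℂ) ^ (-(n₂ : ℤ)) / w₂) n₁ n₂ *
      mfh₂ (τ : ℂ) ((τ : ℂ) ^ (-(n₁ : ℤ)) / w₁) w₂ n₁ n₂ *
      mfh₂ (τ : ℂ) w₁ ((τ : ℂ) ^ (-(n₂ : ℤ)) / w₂) n₁ n₂ =
      (τ : ℂ) ^ (-((n₁ : ℤ) * (n₂ : ℤ))) * mfe (τ : ℂ) w₁ w₂ n₁ n₂ := by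
  obtain ⟨hτ0, hτ1⟩ := hτ
  set s : ℂ := (τ : ℂ) with hs
  have hs0 : s ≠ 0 := by
    simp only [hs, ne_eq, Complex.ofReal_eq_zero]; exact ne_of_gt hτ0
  have hsn : ‖s‖ < 1 := by
    simp only [hs, Complex.norm_real, Real.norm_eq_abs]
    rwa [abs_of_pos hτ0]
  have ha : w₁ * w₂ ≠ 0 := mul_ne_zero hw₁ hw₂
  set a : ℂ := w₁ * w₂ with haa
  have hnzN : ∀ k : ℕ, 1 - s ^ k * a ≠ 0 := fun k => by
    have := hnz (k : ℤ); rwa [zpow_natCast] at this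
  have h0 : 1 - a ≠ 0 := by simpa using hnzN 0
  have hx : 1 - s ^ n₁ * a ≠ 0 := hnzN n₁
  have hy : 1 - s ^ n₂ * a ≠ 0 := hnzN n₂
  have hxy : 1 - s ^ (n₁ + n₂) * a ≠ 0 := hnzN (n₁ + n₂)
  have hDk : ∀ k m : ℕ, s ^ m * a - s ^ k ≠ 0 := by
    intro k m hc
    apply hnz ((m : ℤ) - k)
    rw [zpow_sub₀ hs0, zpow_natCast, zpow_natCast]
    have hk : s ^ k ≠ 0 := pow_ne_zero _ hs0
    field_simp
    linear_combination -hc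
  -- normalize the zpow's
  rw [show (-((n₁ : ℤ) * (n₂ : ℤ))) = -(((n₁ * n₂ : ℕ) : ℤ)) by push_cast; ring]
  simp only [zpow_neg, zpow_natCast]
  -- the two mfh₂ factors
  have h2a : mfh₂ s ((s ^ n₁)⁻¹ / w₁) w₂ n₁ n₂ = mfe s w₁ w₂ n₁ n₂ := by
    rw [mfh₂, mfe]
    have d1 : (s ^ n₁)⁻¹ / w₁ * s ^ n₁ - w₂ ≠ 0 := by
      have e1 : (s ^ n₁)⁻¹ / w₁ * s ^ n₁ - w₂ = (1 - a) / w₁ := by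
        rw [haa]; field_simp
      rw [e1]; exact div_ne_zero h0 hw₁
    have d2 : w₂ * s ^ n₂ - (s ^ n₁)⁻¹ / w₁ ≠ 0 := by
      have e2 : w₂ * s ^ n₂ - (s ^ n₁)⁻¹ / w₁ = -((1 - s ^ (n₁ + n₂) * a) / (s ^ n₁ * w₁)) := by
        rw [haa, pow_add]; field_simp; ring
      rw [e2]
      exact neg_ne_zero.mpr (div_ne_zero hxy (mul_ne_zero (pow_ne_zero _ hs0) hw₁))
    rw [div_eq_div_iff (mul_ne_zero d1 d2) (mul_ne_zero h0 hxy)]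
    rw [pow_add]
    field_simp
    ring
  have h2b : mfh₂ s w₁ ((s ^ n₂)⁻¹ / w₂) n₁ n₂ = mfe s w₁ w₂ n₁ n₂ := by
    rw [mfh₂, mfe]
    have d1 : w₁ * s ^ n₁ - (s ^ n₂)⁻¹ / w₂ ≠ 0 := by
      have e1 : w₁ * s ^ n₁ - (s ^ n₂)⁻¹ / w₂ = -((1 - s ^ (n₁ + n₂) * a) / (s ^ n₂ * w₂)) := by
        rw [haa, pow_add]; field_simp; ring
      rw [e1]
      exact neg_ne_zero.mpr (div_ne_zero hxy (mul_ne_zero (pow_ne_zero _ hs0) hw₂))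
    have d2 : (s ^ n₂)⁻¹ / w₂ * s ^ n₂ - w₁ ≠ 0 := by
      have e2 : (s ^ n₂)⁻¹ / w₂ * s ^ n₂ - w₁ = (1 - a) / w₂ := by
        rw [haa]; field_simp
      rw [e2]; exact div_ne_zero h0 hw₂
    rw [div_eq_div_iff (mul_ne_zero d1 d2) (mul_ne_zero h0 hxy)]
    rw [pow_add]
    field_simp
    ring
  -- the first mfh₁ factor
  have h1a := mfh₁_eq hsn n₁ n₂ hnzN
  -- the second mfh₁ factor
  have hu : (s ^ n₁)⁻¹ / w₁ * ((s ^ n₂)⁻¹ / w₂) = (s ^ (n₁ + n₂) * a)⁻¹ := by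
    rw [haa, pow_add]; field_simp
  have hXne : s ^ (n₁ + n₂) * a ≠ 0 := mul_ne_zero (pow_ne_zero _ hs0) ha
  have hb : ∀ k : ℕ, 1 - s ^ k * ((s ^ n₁)⁻¹ / w₁ * ((s ^ n₂)⁻¹ / w₂)) ≠ 0 := by
    intro k
    rw [hu]
    have e : 1 - s ^ k * (s ^ (n₁ + n₂) * a)⁻¹ =
        (s ^ (n₁ + n₂) * a - s ^ k) / (s ^ (n₁ + n₂) * a) := by
      field_simp
    rw [e]
    exact div_ne_zero (hDk k (n₁ + n₂)) hXne
  have h1b := mfh₁_eq hsn n₁ n₂ hb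
  -- rewrite the numerator product of the second mfh₁
  have hA' : (∏ k ∈ Finset.range n₁, (1 - s ^ k * ((s ^ n₁)⁻¹ / w₁ * ((s ^ n₂)⁻¹ / w₂)))) =
      (∏ k ∈ Finset.range n₁, (-(s ^ k) * (s ^ (n₁ + n₂) * a)⁻¹)) *
        ∏ k ∈ Finset.range n₁, (1 - s ^ (n₂ + (k + 1)) * a) := by
    rw [← Finset.prod_range_reflect (fun k => 1 - s ^ (n₂ + (k + 1)) * a) n₁,
      ← Finset.prod_mul_distrib]
    refine Finset.prod_congr rfl fun k hk => ?_
    have hk' : k < n₁ := Finset.mem_range.mp hk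
    have hexp : n₂ + ((n₁ - 1 - k) + 1) = (n₁ + n₂) - k := by omega
    have hpow : s ^ (n₁ + n₂) = s ^ ((n₁ + n₂) - k) * s ^ k := by
      rw [← pow_add]; congr 1; omega
    rw [hu, hexp, hpow]
    have h1 : s ^ ((n₁ + n₂) - k) ≠ 0 := pow_ne_zero _ hs0
    have h2 : s ^ k ≠ 0 := pow_ne_zero _ hs0
    field_simp
    ring
  have hB' : (∏ k ∈ Finset.range n₁, (1 - s ^ (n₂ + k) * ((s ^ n₁)⁻¹ / w₁ * ((s ^ n₂)⁻¹ / w₂)))) =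
      s ^ (n₂ * n₁) * ((∏ k ∈ Finset.range n₁, (-(s ^ k) * (s ^ (n₁ + n₂) * a)⁻¹)) *
        ∏ k ∈ Finset.range n₁, (1 - s ^ (k + 1) * a)) := by
    have step1 : (∏ k ∈ Finset.range n₁,
        (1 - s ^ (n₂ + k) * ((s ^ n₁)⁻¹ / w₁ * ((s ^ n₂)⁻¹ / w₂)))) =
        ∏ k ∈ Finset.range n₁, ((s ^ n₂ * (-(s ^ k) * (s ^ (n₁ + n₂) * a)⁻¹)) *
          (1 - s ^ ((n₁ - 1 - k) + 1) * a)) := by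
      refine Finset.prod_congr rfl fun k hk => ?_
      have hk' : k < n₁ := Finset.mem_range.mp hk
      have hpow : s ^ (n₁ + n₂) = s ^ ((n₁ - 1 - k) + 1) * s ^ (n₂ + k) := by
        rw [← pow_add]; congr 1; omega
      have hpow2 : s ^ (n₂ + k) = s ^ n₂ * s ^ k := by rw [← pow_add]
      rw [hu, hpow, hpow2]
      have h1 : s ^ ((n₁ - 1 - k) + 1) ≠ 0 := pow_ne_zero _ hs0
      have h2 : s ^ k ≠ 0 := pow_ne_zero _ hs0
      have h3 : s ^ n₂ ≠ 0 := pow_ne_zero _ hs0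
      field_simp
      ring
    rw [step1]
    simp only [mul_assoc, Finset.prod_mul_distrib]
    rw [Finset.prod_const, Finset.card_range, ← pow_mul,
      Finset.prod_range_reflect (fun k => 1 - s ^ (k + 1) * a) n₁, ← Finset.prod_mul_distrib]
  -- telescoping identities
  have T1 : (∏ k ∈ Finset.range n₁, (1 - s ^ k * a)) * (1 - s ^ n₁ * a) =
      (∏ k ∈ Finset.range n₁, (1 - s ^ (k + 1) * a)) * (1 - a) := by
    have p1 := Finset.prod_range_succ (fun k => 1 - s ^ k * a) n₁
    have p2 := Finset.prod_range_succ' (fun k => 1 - s ^ k * a) n₁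
    have := p1.symm.trans p2
    simpa using this
  have T2 : (∏ k ∈ Finset.range n₁, (1 - s ^ (n₂ + k) * a)) * (1 - s ^ (n₂ + n₁) * a) =
      (∏ k ∈ Finset.range n₁, (1 - s ^ (n₂ + (k + 1)) * a)) * (1 - s ^ n₂ * a) := by
    have p1 := Finset.prod_range_succ (fun k => 1 - s ^ (n₂ + k) * a) n₁
    have p2 := Finset.prod_range_succ' (fun k => 1 - s ^ (n₂ + k) * a) n₁
    have := p1.symm.trans p2
    simpa using this
  -- nonvanishing of the finite products
  have hCne : (∏ k ∈ Finset.range n₁, (1 - s ^ (k + 1) * a)) ≠ 0 :=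
    Finset.prod_ne_zero_iff.mpr fun k _ => hnzN (k + 1)
  have hDne : (∏ k ∈ Finset.range n₁, (1 - s ^ (n₂ + (k + 1)) * a)) ≠ 0 :=
    Finset.prod_ne_zero_iff.mpr fun k _ => hnzN (n₂ + (k + 1))
  have hEne : (∏ k ∈ Finset.range n₁, (-(s ^ k) * (s ^ (n₁ + n₂) * a)⁻¹)) ≠ 0 :=
    Finset.prod_ne_zero_iff.mpr fun k _ =>
      mul_ne_zero (neg_ne_zero.mpr (pow_ne_zero _ hs0)) (inv_ne_zero hXne)
  have hxy' : 1 - s ^ (n₂ + n₁) * a ≠ 0 := hnzN (n₂ + n₁)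
  -- solve for A and B using the telescoping identities
  have hA : (∏ k ∈ Finset.range n₁, (1 - s ^ k * a)) =
      (∏ k ∈ Finset.range n₁, (1 - s ^ (k + 1) * a)) * (1 - a) / (1 - s ^ n₁ * a) := by
    rw [eq_div_iff hx]; exact T1
  have hB : (∏ k ∈ Finset.range n₁, (1 - s ^ (n₂ + k) * a)) =
      (∏ k ∈ Finset.range n₁, (1 - s ^ (n₂ + (k + 1)) * a)) * (1 - s ^ n₂ * a) /
        (1 - s ^ (n₂ + n₁) * a) := by
    rw [eq_div_iff hxy']; exact T2
  rw [h1a, h1b, hA', hB', h2a, h2b, hA, hB, mfe]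
  have hsn₁n₂ : s ^ (n₁ * n₂) ≠ 0 := pow_ne_zero _ hs0
  have hadd : s ^ (n₂ + n₁) = s ^ (n₁ + n₂) := by rw [add_comm]
  rw [hadd]
  have hmul : s ^ (n₂ * n₁) = s ^ (n₁ * n₂) := by rw [mul_comm]
  rw [hmul]
  clear_value a s
  rw [← haa]
  generalize (∏ k ∈ Finset.range n₁, (-(s ^ k) * (s ^ (n₁ + n₂) * a)⁻¹)) = E at hEne ⊢
  generalize (∏ k ∈ Finset.range n₁, (1 - s ^ (k + 1) * a)) = C at hCne ⊢
  generalize (∏ k ∈ Finset.range n₁, (1 - s ^ (n₂ + (k + 1)) * a)) = D at hDne ⊢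
  field_simp
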